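/- Suppose f : R^n → R is C^2 with L-Lipschitz Hessian. Then for any x^0 ∈ R^n and u, v ∈ R^n with ||u||, ||v|| ≤ Δ, |2f(x^0 + (u+v)/2) + 2f(x^0 − (u+v)/2) − (1/2)(f(x^0+u) + f(x^0+v) + f(x^0−u) + f(x^0−v)) − 2f(x^0) − uᵀ∇²f(x^0)v| ≤ (2L/3)Δ³. -/

import Mathlib

open Matrix
open scoped RealInnerProductSpace

noncomputable section

abbrev Eu (n : ℕ) := EuclideanSpace ℝ (Fin n)

def IsMP {a b : ℕ} (A : Matrix (Fin a) (Fin b) ℝ) (A' : Matrix (Fin b) (Fin a) ℝ) : Prop :=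
  A * A' * A = A ∧ A' * A * A' = A' ∧ (A * A')ᵀ = A * A' ∧ (A' * A)ᵀ = A' * A

def euclNorm {k : ℕ} (v : Fin k → ℝ) : ℝ := Real.sqrt (∑ i, v i ^ 2)

def spNorm {a b : ℕ} (A : Matrix (Fin a) (Fin b) ℝ) : ℝ :=
  ⨆ v : {v : Fin b → ℝ // euclNorm v ≤ 1}, euclNorm (A.mulVec v.1)

def frobNorm {a b : ℕ} (A : Matrix (Fin a) (Fin b) ℝ) : ℝ :=
  Real.sqrt (∑ i, ∑ j, A i j ^ 2)

def mat1Norm {a b : ℕ} (A : Matrix (Fin a) (Fin b) ℝ) : ℝ := ⨆ j, ∑ i, |A i j|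

lemma euclNorm_eq {n : ℕ} (v : Eu n) : euclNorm (fun i => v i) = ‖v‖ := by
  simp [euclNorm, EuclideanSpace.norm_eq, Real.norm_eq_abs, sq_abs]

lemma toECLM_apply {n : ℕ} (M : Matrix (Fin n) (Fin n) ℝ) (x : Eu n) :
    (Matrix.toEuclideanCLM (𝕜 := ℝ) M) x = (WithLp.equiv 2 _).symm (M.mulVec ((WithLp.equiv 2 _) x)) := rfl

lemma euclNorm_mulVec_eq {n : ℕ} (M : Matrix (Fin n) (Fin n) ℝ) (x : Eu n) :
    euclNorm (M.mulVec (fun i => x i)) = ‖(Matrix.toEuclideanCLM (𝕜 := ℝ) M) x‖ := by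
  rw [toECLM_apply]
  exact (euclNorm_eq _).symm |>.trans rfl |>.symm ▸ rfl

lemma norm_toECLM_le_spNorm {n : ℕ} (M : Matrix (Fin n) (Fin n) ℝ) (x : Eu n) :
    ‖(Matrix.toEuclideanCLM (𝕜 := ℝ) M) x‖ ≤ spNorm M * ‖x‖ := by
  set T := Matrix.toEuclideanCLM (𝕜 := ℝ) M with hT
  have key : ∀ y : Eu n, euclNorm (fun i => y i) ≤ 1 → ‖T y‖ ≤ spNorm M := by
    intro y hy
    have hbdd : BddAbove (Set.range fun v : {v : Fin n → ℝ // euclNorm v ≤ 1} =>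
        euclNorm (M.mulVec v.1)) := by
      refine ⟨‖T‖, ?_⟩
      rintro _ ⟨v, rfl⟩
      have h1 : euclNorm (M.mulVec v.1) = ‖T ((WithLp.equiv 2 _).symm v.1)‖ := by
        exact euclNorm_mulVec_eq M ((WithLp.equiv 2 _).symm v.1)
      have h2 : ‖((WithLp.equiv 2 ((i : Fin n) → ℝ)).symm v.1 : Eu n)‖ ≤ 1 := by
        have := euclNorm_eq ((WithLp.equiv 2 ((i : Fin n) → ℝ)).symm v.1)
        rw [← this]
        simpa using v.2
      calc euclNorm (M.mulVec v.1) = ‖T ((WithLp.equiv 2 _).symm v.1)‖ := h1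
        _ ≤ ‖T‖ * ‖((WithLp.equiv 2 ((i : Fin n) → ℝ)).symm v.1 : Eu n)‖ := T.le_opNorm _
        _ ≤ ‖T‖ * 1 := by
            exact mul_le_mul_of_nonneg_left h2 (norm_nonneg _)
        _ = ‖T‖ := mul_one _
    have := le_ciSup hbdd (⟨fun i => y i, hy⟩ : {v : Fin n → ℝ // euclNorm v ≤ 1})
    calc ‖T y‖ = euclNorm (M.mulVec (fun i => y i)) := (euclNorm_mulVec_eq M y).symm
      _ ≤ spNorm M := this
  rcases eq_or_ne x 0 with rfl | hx
  · simp [spNorm]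
  · have hxn : 0 < ‖x‖ := norm_pos_iff.mpr hx
    have h1 : ‖T (‖x‖⁻¹ • x)‖ ≤ spNorm M := by
      apply key
      rw [euclNorm_eq (‖x‖⁻¹ • x)]
      simp [norm_smul, abs_of_nonneg (le_of_lt (inv_pos.mpr hxn)), inv_mul_cancel₀ (ne_of_gt hxn)]
    have h2 : ‖T (‖x‖⁻¹ • x)‖ = ‖x‖⁻¹ * ‖T x‖ := by
      rw [T.map_smul, norm_smul, Real.norm_eq_abs, abs_of_nonneg (le_of_lt (inv_pos.mpr hxn))]
    rw [h2] at h1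
    calc ‖T x‖ = ‖x‖ * (‖x‖⁻¹ * ‖T x‖) := by field_simp
      _ ≤ ‖x‖ * spNorm M := mul_le_mul_of_nonneg_left h1 (norm_nonneg _)
      _ = spNorm M * ‖x‖ := mul_comm _ _

open scoped RealInnerProductSpace

lemma inner_eq_dot {n : ℕ} (a b : Eu n) : ⟪a, b⟫ = (fun i => a i) ⬝ᵥ (fun i => b i) := by
  simp [PiLp.inner_apply, dotProduct, RCLike.inner_apply, mul_comm]

lemma dot_mulVec_eq_inner {n : ℕ} (M : Matrix (Fin n) (Fin n) ℝ) (a b : Eu n) :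
    (fun i => a i) ⬝ᵥ M.mulVec (fun i => b i) = ⟪a, (Matrix.toEuclideanCLM (𝕜 := ℝ) M) b⟫ := by
  rw [inner_eq_dot a ((Matrix.toEuclideanCLM (𝕜 := ℝ) M) b)]
  congr 1

lemma qf_bound {n : ℕ} (M : Matrix (Fin n) (Fin n) ℝ) (a b : Eu n) :
    |(fun i => a i) ⬝ᵥ M.mulVec (fun i => b i)| ≤ spNorm M * ‖a‖ * ‖b‖ := by
  rw [dot_mulVec_eq_inner]
  calc |⟪a, (Matrix.toEuclideanCLM (𝕜 := ℝ) M) b⟫| ≤ ‖a‖ * ‖(Matrix.toEuclideanCLM (𝕜 := ℝ) M) b‖ :=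
        abs_real_inner_le_norm _ _
    _ ≤ ‖a‖ * (spNorm M * ‖b‖) := mul_le_mul_of_nonneg_left (norm_toECLM_le_spNorm M b) (norm_nonneg _)
    _ = spNorm M * ‖a‖ * ‖b‖ := by ring

lemma fence (φ φ' : ℝ → ℝ) (hφ : ∀ t, HasDerivAt φ (φ' t) t) (h0 : φ 0 = 0)
    (m : ℕ) (C : ℝ)
    (bound : ∀ t ∈ Set.Ico (0:ℝ) 1, |φ' t| ≤ C * t^m) :
    ∀ t ∈ Set.Icc (0:ℝ) 1, |φ t| ≤ C / (m+1) * t^(m+1) := by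
  have hB : ∀ t : ℝ, HasDerivAt (fun t => C / (m+1) * t^(m+1)) (C * t^m) t := by
    intro t
    have h := (hasDerivAt_pow (m+1) t).const_mul (C / ((m:ℝ)+1))
    refine h.congr_deriv ?_
    have : ((m:ℝ)+1) ≠ 0 := by positivity
    push_cast
    field_simp
  have key := image_norm_le_of_norm_deriv_right_le_deriv_boundary
    (f := φ) (f' := φ') (a := 0) (b := 1)
    (fun t _ => (hφ t).continuousAt.continuousWithinAt)
    (fun t _ => (hφ t).hasDerivWithinAt)
    (by simp [h0, Real.norm_eq_abs])
    hB
    (fun t ht => by simpa [Real.norm_eq_abs] using bound t ht)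
  intro t ht
  simpa [Real.norm_eq_abs] using key ht

section deriv
variable {n : ℕ} {f : Eu n → ℝ} {g : Eu n → Eu n}
  {Hf : Eu n → Matrix (Fin n) (Fin n) ℝ}

lemma line_deriv (c e : Eu n) (t : ℝ) : HasDerivAt (fun s : ℝ => c + s • e) e t := by
  simpa using ((hasDerivAt_id t).smul_const e).const_add c

lemma D1 (hgrad : ∀ x, HasGradientAt f (g x) x) (c e : Eu n) (t : ℝ) :
    HasDerivAt (fun s : ℝ => f (c + s • e))
      ((fun i => e i) ⬝ᵥ (fun i => g (c + t • e) i)) t := by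
  have h := (hgrad (c + t • e)).hasFDerivAt.comp_hasDerivAt t (line_deriv c e t)
  refine h.congr_deriv ?_
  rw [InnerProductSpace.toDual_apply_apply, real_inner_comm]
  exact (inner_eq_dot _ _)

lemma D2 (hhess : ∀ x, HasFDerivAt g (Matrix.toEuclideanCLM (𝕜 := ℝ) (Hf x)) x)
    (c e : Eu n) (t : ℝ) :
    HasDerivAt (fun s : ℝ => (fun i => e i) ⬝ᵥ (fun i => g (c + s • e) i))
      ((fun i => e i) ⬝ᵥ (Hf (c + t • e)).mulVec (fun i => e i)) t := by
  have h1 : HasDerivAt (fun s : ℝ => g (c + s • e))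
      ((Matrix.toEuclideanCLM (𝕜 := ℝ) (Hf (c + t • e))) e) t :=
    (hhess (c + t • e)).comp_hasDerivAt t (line_deriv c e t)
  have h2 := ((innerSL ℝ e).hasFDerivAt.comp_hasDerivAt t h1)
  have hfun : (fun s : ℝ => (fun i => e i) ⬝ᵥ (fun i => g (c + s • e) i))
      = (innerSL ℝ e) ∘ fun s => g (c + s • e) := by
    funext s; simp only [Function.comp_apply, innerSL_apply_apply]; exact (inner_eq_dot _ _).symm
  rw [hfun]
  refine h2.congr_deriv ?_
  rw [innerSL_apply_apply]
  exact (dot_mulVec_eq_inner _ _ _).symm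
end deriv

section taylor
variable {n : ℕ} {f : Eu n → ℝ} {g : Eu n → Eu n}
  {Hf : Eu n → Matrix (Fin n) (Fin n) ℝ} {L : ℝ}

lemma taylor_bound (hL : 0 ≤ L)
    (hgrad : ∀ x, HasGradientAt f (g x) x)
    (hhess : ∀ x, HasFDerivAt g (Matrix.toEuclideanCLM (𝕜 := ℝ) (Hf x)) x)
    (hlip : ∀ x y, spNorm (Hf x - Hf y) ≤ L * ‖x - y‖)
    (c d : Eu n) :
    |f (c + d) + f (c - d) - 2 * f c - (fun i => d i) ⬝ᵥ (Hf c).mulVec (fun i => d i)|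
      ≤ L / 3 * ‖d‖ ^ 3 := by
  set q0 : ℝ := (fun i => d i) ⬝ᵥ (Hf c).mulVec (fun i => d i) with hq0
  -- the derivative function k
  set k : ℝ → ℝ := fun t =>
    ((fun i => d i) ⬝ᵥ (fun i => g (c + t • d) i))
    + ((fun i => (-d : Eu n) i) ⬝ᵥ (fun i => g (c + t • (-d)) i))
    - 2 * q0 * t with hk
  set k' : ℝ → ℝ := fun t =>
    ((fun i => d i) ⬝ᵥ (Hf (c + t • d)).mulVec (fun i => d i))
    + ((fun i => (-d : Eu n) i) ⬝ᵥ (Hf (c + t • (-d))).mulVec (fun i => (-d : Eu n) i))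
    - 2 * q0 with hk'
  have hkderiv : ∀ t, HasDerivAt k (k' t) t := by
    intro t
    have hlin : HasDerivAt (fun t : ℝ => 2 * q0 * t) (2 * q0) t := by
      simpa using (hasDerivAt_id t).const_mul (2 * q0)
    exact ((D2 hhess c d t).add (D2 hhess c (-d) t)).sub hlin
  have negdot : ∀ M : Matrix (Fin n) (Fin n) ℝ,
      ((fun i => (-d : Eu n) i) ⬝ᵥ M.mulVec (fun i => (-d : Eu n) i))
        = ((fun i => d i) ⬝ᵥ M.mulVec (fun i => d i)) := by
    intro M
    have h1 : (fun i => (-d : Eu n) i) = -(fun i => d i) := rfl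
    rw [h1, Matrix.mulVec_neg, neg_dotProduct, dotProduct_neg, neg_neg]
  have hkbound : ∀ t ∈ Set.Ico (0:ℝ) 1, |k' t| ≤ (2 * L * ‖d‖^3) * t^1 := by
    intro t ht
    have ht0 : 0 ≤ t := ht.1
    have e1 : k' t = ((fun i => d i) ⬝ᵥ (Hf (c + t • d) - Hf c).mulVec (fun i => d i))
        + ((fun i => d i) ⬝ᵥ (Hf (c + t • (-d)) - Hf c).mulVec (fun i => d i)) := by
      rw [hk']
      simp only [negdot, Matrix.sub_mulVec, dotProduct_sub]
      ring
    have b1 : |(fun i => d i) ⬝ᵥ (Hf (c + t • d) - Hf c).mulVec (fun i => d i)|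
        ≤ (L * (t * ‖d‖)) * ‖d‖ * ‖d‖ := by
      refine le_trans (qf_bound _ d d) ?_
      have : spNorm (Hf (c + t • d) - Hf c) ≤ L * (t * ‖d‖) := by
        have := hlip (c + t • d) c
        simpa [norm_smul, abs_of_nonneg ht0] using this
      have hd : (0:ℝ) ≤ ‖d‖ := norm_nonneg _
      exact mul_le_mul_of_nonneg_right (mul_le_mul_of_nonneg_right this hd) hd
    have b2 : |(fun i => d i) ⬝ᵥ (Hf (c + t • (-d)) - Hf c).mulVec (fun i => d i)|
        ≤ (L * (t * ‖d‖)) * ‖d‖ * ‖d‖ := by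
      refine le_trans (qf_bound _ d d) ?_
      have : spNorm (Hf (c + t • (-d)) - Hf c) ≤ L * (t * ‖d‖) := by
        have := hlip (c + t • (-d)) c
        simpa [norm_smul, abs_of_nonneg ht0] using this
      have hd : (0:ℝ) ≤ ‖d‖ := norm_nonneg _
      exact mul_le_mul_of_nonneg_right (mul_le_mul_of_nonneg_right this hd) hd
    rw [e1]
    calc |_ + _| ≤ _ := abs_add_le _ _
      _ ≤ (L * (t * ‖d‖)) * ‖d‖ * ‖d‖ + (L * (t * ‖d‖)) * ‖d‖ * ‖d‖ := add_le_add b1 b2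
      _ = (2 * L * ‖d‖^3) * t^1 := by ring
  have hk0 : k 0 = 0 := by
    rw [hk]
    simp only [zero_smul, add_zero, mul_zero, sub_zero]
    have h1 : (fun i => (-d : Eu n) i) = -(fun i => d i) := rfl
    rw [h1, neg_dotProduct]
    ring
  have kbnd := fence k k' hkderiv hk0 1 (2 * L * ‖d‖^3) hkbound
  -- the function h
  set h : ℝ → ℝ := fun t => f (c + t • d) + f (c + t • (-d)) - 2 * f c - q0 * t^2 with hh
  have hhderiv : ∀ t, HasDerivAt h (k t) t := by
    intro t
    have := (((D1 hgrad c d t).add (D1 hgrad c (-d) t)).sub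
      (hasDerivAt_const t (2 * f c))).sub ((hasDerivAt_pow 2 t).const_mul q0)
    refine this.congr_deriv ?_
    rw [hk]
    push_cast
    ring
  have hh0 : h 0 = 0 := by simp only [hh]; simp; ring
  have hbnd : ∀ t ∈ Set.Ico (0:ℝ) 1, |k t| ≤ (L * ‖d‖^3) * t^2 := by
    intro t ht
    refine le_trans (kbnd t ⟨ht.1, le_of_lt ht.2⟩) (le_of_eq ?_)
    push_cast
    ring
  have final := fence h k hhderiv hh0 2 (L * ‖d‖^3) hbnd 1 ⟨zero_le_one, le_refl 1⟩
  have e2 : h 1 = f (c + d) + f (c - d) - 2 * f c - q0 := by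
    have p1 : c + (1:ℝ) • d = c + d := by simp
    have p2 : c + (1:ℝ) • (-d) = c - d := by simp [sub_eq_add_neg]
    simp only [hh, p1, p2, one_pow, mul_one]
  rw [e2] at final
  refine le_trans final (le_of_eq ?_)
  push_cast
  ring
end taylor

section symm
variable {n : ℕ} {f : Eu n → ℝ} {g : Eu n → Eu n}
  {Hf : Eu n → Matrix (Fin n) (Fin n) ℝ}

lemma hess_symm (hgrad : ∀ x, HasGradientAt f (g x) x)
    (hhess : ∀ x, HasFDerivAt g (Matrix.toEuclideanCLM (𝕜 := ℝ) (Hf x)) x)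
    (x0 a b : Eu n) :
    (fun i => a i) ⬝ᵥ (Hf x0).mulVec (fun i => b i)
      = (fun i => b i) ⬝ᵥ (Hf x0).mulVec (fun i => a i) := by
  set f' : Eu n → (Eu n →L[ℝ] ℝ) := fun y => innerSL ℝ (g y) with hf'
  have hf'd : ∀ y, HasFDerivAt f (f' y) y := by
    intro y
    have h := (hgrad y).hasFDerivAt
    refine h.congr_fderiv ?_
    ext z; simp [hf', InnerProductSpace.toDual_apply_apply, innerSL_apply_apply]
  have hf'' : HasFDerivAt f' ((innerSL ℝ (E := Eu n)).comp
      (Matrix.toEuclideanCLM (𝕜 := ℝ) (Hf x0))) x0 := by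
    have h := ((innerSL ℝ (E := Eu n)).hasFDerivAt).comp x0 (hhess x0)
    exact h
  have hsym := second_derivative_symmetric hf'd hf'' a b
  have e1 : ∀ w z : Eu n, ((innerSL ℝ (E := Eu n)).comp
      (Matrix.toEuclideanCLM (𝕜 := ℝ) (Hf x0))) w z
        = (fun i => z i) ⬝ᵥ (Hf x0).mulVec (fun i => w i) := by
    intro w z
    simp only [ContinuousLinearMap.comp_apply, innerSL_apply_apply]
    rw [inner_eq_dot, dotProduct_comm]
    rfl
  rw [e1, e1] at hsym
  exact hsym.symm
end symm

lemma scalar_ineq (s r Δ : ℝ) (hs : 0 ≤ s) (hr : 0 ≤ r) (hΔ : 0 < Δ) (h : s^2 + r^2 ≤ Δ^2) :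
    s^3 + r^3 + 3*s*r^2 ≤ 2*Δ^3 := by
  have h1 : (s^3 + r^3 + 3*s*r^2)^2 ≤ 4*(s^2+r^2)^3 := by
    nlinarith [sq_nonneg (s^3), sq_nonneg (12*s^2*r-2*s*r^2-r^3), sq_nonneg (46*s*r^2-37*r^3), sq_nonneg (r^3)]
  have h2 : (s^2+r^2)^3 ≤ (Δ^2)^3 := pow_le_pow_left₀ (by positivity) h 3
  have h3 : 0 ≤ s^3 + r^3 + 3*s*r^2 := by positivity
  nlinarith [sq_nonneg (s^3 + r^3 + 3*s*r^2 - 2*Δ^3), pow_pos hΔ 3]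

lemma abs_comb (a b c d e : ℝ) :
    |a - (1/2)*b - (1/2)*c + ((1/2)*d + (1/2)*e)|
      ≤ |a| + (1/2)*|b| + (1/2)*|c| + ((1/2)*|d| + (1/2)*|e|) := by
  have h1 := abs_add_le (a - (1/2)*b - (1/2)*c) ((1/2)*d + (1/2)*e)
  have h2 := abs_add_le (a - (1/2)*b) (-((1/2)*c))
  have h3 := abs_add_le a (-((1/2)*b))
  have h4 := abs_add_le ((1/2)*d) ((1/2)*e)
  have e2 : a - (1/2)*b - (1/2)*c = (a - (1/2)*b) + (-((1/2)*c)) := by ring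
  have e3 : a - (1/2)*b = a + (-((1/2)*b)) := by ring
  rw [← e2] at h2
  rw [← e3] at h3
  have n1 : |(-((1/2)*b))| = (1/2)*|b| := by rw [abs_neg, abs_mul]; norm_num
  have n2 : |(-((1/2)*c))| = (1/2)*|c| := by rw [abs_neg, abs_mul]; norm_num
  have n3 : |(1/2)*d| = (1/2)*|d| := by rw [abs_mul]; norm_num
  have n4 : |(1/2)*e| = (1/2)*|e| := by rw [abs_mul]; norm_num
  rw [n2] at h2; rw [n1] at h3; rw [n3, n4] at h4
  linarith

set_option maxHeartbeats 1000000 in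
theorem stmt_5 {n : ℕ} (f : Eu n → ℝ) (g : Eu n → Eu n)
    (Hf : Eu n → Matrix (Fin n) (Fin n) ℝ) (L : ℝ) (hL : 0 ≤ L)
    (hgrad : ∀ x, HasGradientAt f (g x) x)
    (hhess : ∀ x, HasFDerivAt g (Matrix.toEuclideanCLM (𝕜 := ℝ) (Hf x)) x)
    (hlip : ∀ x y, spNorm (Hf x - Hf y) ≤ L * ‖x - y‖)
    (x0 u v : Eu n) (Δ : ℝ) (hΔ : 0 < Δ) (hu : ‖u‖ ≤ Δ) (hv : ‖v‖ ≤ Δ) :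
    |2 * f (x0 + (1/2 : ℝ) • (u + v)) + 2 * f (x0 - (1/2 : ℝ) • (u + v))
        - (1/2) * f (x0 + u) - (1/2) * f (x0 + v)
        - (1/2) * f (x0 - u) - (1/2) * f (x0 - v)
        - 2 * f x0 - u ⬝ᵥ (Hf x0).mulVec v|
      ≤ 2 * L / 3 * Δ ^ 3 := by
  set p : Eu n := (1/2 : ℝ) • (u + v) with hp
  set q : Eu n := (1/2 : ℝ) • (u - v) with hq
  have hupq : u = p + q := by rw [hp, hq]; module
  have hvpq : v = p - q := by rw [hp, hq]; module
  have eu : x0 + u = (x0 + p) + q := by rw [hupq]; abel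
  have ev : x0 + v = (x0 + p) - q := by rw [hvpq]; abel
  have emu : x0 - u = (x0 - p) - q := by rw [hupq]; abel
  have emv : x0 - v = (x0 - p) + q := by rw [hvpq]; abel
  have hufun : (fun i : Fin n => u i) = (fun i => p i) + (fun i => q i) := by
    rw [hupq]; rfl
  have hvfun : (fun i : Fin n => v i) = (fun i => p i) - (fun i => q i) := by
    rw [hvpq]; rfl
  have qid : (fun i => u i) ⬝ᵥ (Hf x0).mulVec (fun i => v i)
      = (fun i => p i) ⬝ᵥ (Hf x0).mulVec (fun i => p i)
        - (fun i => q i) ⬝ᵥ (Hf x0).mulVec (fun i => q i) := by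
    rw [hufun, hvfun]
    simp only [add_dotProduct, Matrix.mulVec_sub, dotProduct_sub]
    have hsym := hess_symm hgrad hhess x0 p q
    linarith [hsym]
  have hT0 := taylor_bound hL hgrad hhess hlip x0 p
  have hTp := taylor_bound hL hgrad hhess hlip (x0 + p) q
  have hTm := taylor_bound hL hgrad hhess hlip (x0 - p) q
  have hZp : spNorm (Hf x0 - Hf (x0 + p)) ≤ L * ‖p‖ := by
    have h := hlip x0 (x0 + p)
    have e : x0 - (x0 + p) = -p := by abel
    rw [e] at h
    simpa using h
  have hZm : spNorm (Hf x0 - Hf (x0 - p)) ≤ L * ‖p‖ := by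
    have h := hlip x0 (x0 - p)
    have e : x0 - (x0 - p) = p := by abel
    rw [e] at h
    simpa using h
  have bZp : |(fun i => q i) ⬝ᵥ (Hf x0 - Hf (x0 + p)).mulVec (fun i => q i)|
      ≤ L * ‖p‖ * ‖q‖ * ‖q‖ := by
    refine le_trans (qf_bound _ q q) ?_
    exact mul_le_mul_of_nonneg_right (mul_le_mul_of_nonneg_right hZp (norm_nonneg _)) (norm_nonneg _)
  have bZm : |(fun i => q i) ⬝ᵥ (Hf x0 - Hf (x0 - p)).mulVec (fun i => q i)|
      ≤ L * ‖p‖ * ‖q‖ * ‖q‖ := by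
    refine le_trans (qf_bound _ q q) ?_
    exact mul_le_mul_of_nonneg_right (mul_le_mul_of_nonneg_right hZm (norm_nonneg _)) (norm_nonneg _)
  have decomp : 2 * f (x0 + p) + 2 * f (x0 - p)
        - (1/2) * f (x0 + u) - (1/2) * f (x0 + v)
        - (1/2) * f (x0 - u) - (1/2) * f (x0 - v)
        - 2 * f x0 - (fun i => u i) ⬝ᵥ (Hf x0).mulVec (fun i => v i)
      = (f (x0 + p) + f (x0 - p) - 2 * f x0
            - (fun i => p i) ⬝ᵥ (Hf x0).mulVec (fun i => p i))
        - (1/2) * (f ((x0 + p) + q) + f ((x0 + p) - q) - 2 * f (x0 + p)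
            - (fun i => q i) ⬝ᵥ (Hf (x0 + p)).mulVec (fun i => q i))
        - (1/2) * (f ((x0 - p) + q) + f ((x0 - p) - q) - 2 * f (x0 - p)
            - (fun i => q i) ⬝ᵥ (Hf (x0 - p)).mulVec (fun i => q i))
        + ((1/2) * ((fun i => q i) ⬝ᵥ (Hf x0 - Hf (x0 + p)).mulVec (fun i => q i))
           + (1/2) * ((fun i => q i) ⬝ᵥ (Hf x0 - Hf (x0 - p)).mulVec (fun i => q i))) := by
    rw [eu, ev, emu, emv, qid]
    simp only [Matrix.sub_mulVec, dotProduct_sub]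
    ring
  have hnorm : ‖p‖^2 + ‖q‖^2 ≤ Δ^2 := by
    have par := parallelogram_law_with_norm ℝ u v
    have hpn : ‖p‖ = (1/2) * ‖u + v‖ := by
      rw [hp, norm_smul]; simp
    have hqn : ‖q‖ = (1/2) * ‖u - v‖ := by
      rw [hq, norm_smul]; simp
    nlinarith [norm_nonneg (u+v), norm_nonneg (u-v), norm_nonneg u, norm_nonneg v]
  have hs : (0:ℝ) ≤ ‖p‖ := norm_nonneg _
  have hr : (0:ℝ) ≤ ‖q‖ := norm_nonneg _
  have scal := scalar_ineq ‖p‖ ‖q‖ Δ hs hr hΔ hnorm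
  have goal_eq : 2 * f (x0 + p) + 2 * f (x0 - p)
        - (1/2) * f (x0 + u) - (1/2) * f (x0 + v)
        - (1/2) * f (x0 - u) - (1/2) * f (x0 - v)
        - 2 * f x0 - u ⬝ᵥ (Hf x0).mulVec v
      = 2 * f (x0 + p) + 2 * f (x0 - p)
        - (1/2) * f (x0 + u) - (1/2) * f (x0 + v)
        - (1/2) * f (x0 - u) - (1/2) * f (x0 - v)
        - 2 * f x0 - (fun i => u i) ⬝ᵥ (Hf x0).mulVec (fun i => v i) := rfl
  rw [goal_eq, decomp]
  refine le_trans (abs_comb _ _ _ _ _) ?_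
  have s1 : (1/2 : ℝ) * |f ((x0 + p) + q) + f ((x0 + p) - q) - 2 * f (x0 + p)
      - (fun i => q i) ⬝ᵥ (Hf (x0 + p)).mulVec (fun i => q i)| ≤ (1/2) * (L/3 * ‖q‖^3) := by
    linarith [hTp]
  have s2 : (1/2 : ℝ) * |f ((x0 - p) + q) + f ((x0 - p) - q) - 2 * f (x0 - p)
      - (fun i => q i) ⬝ᵥ (Hf (x0 - p)).mulVec (fun i => q i)| ≤ (1/2) * (L/3 * ‖q‖^3) := by
    linarith [hTm]
  have s3 : (1/2 : ℝ) * |(fun i => q i) ⬝ᵥ (Hf x0 - Hf (x0 + p)).mulVec (fun i => q i)|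
      + (1/2) * |(fun i => q i) ⬝ᵥ (Hf x0 - Hf (x0 - p)).mulVec (fun i => q i)|
      ≤ L * ‖p‖ * ‖q‖ * ‖q‖ := by
    linarith [bZp, bZm]
  have final := add_le_add (add_le_add (add_le_add hT0 s1) s2) s3
  refine le_trans final ?_
  nlinarith [mul_le_mul_of_nonneg_left scal (show (0:ℝ) ≤ L/3 by linarith)]
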